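/- Let G be a graph with a perfect matching M, and let 𝒞 be a set of pairwise vertex-disjoint M-alternating cycles of G. Let S ⊆ M consist of exactly one M-edge from each cycle in 𝒞. If every edge of M lying on a cycle of 𝒞 other than those in S belongs to every perfect matching of G − V(S), then S is contained in some minimum forcing set of M. -/

import Mathlib

open SimpleGraph

section Helpers

variable {V : Type*} {G : SimpleGraph V}

lemma edges_get' : ∀ {u w : V} (p : G.Walk u w) (i : ℕ) (h : i < p.length),
    p.edges.get ⟨i, by rwa [p.length_edges]⟩ = s(p.getVert i, p.getVert (i+1))
  | _, _, .cons h q, 0, _ => by simp [SimpleGraph.Walk.edges, SimpleGraph.Walk.getVert]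
  | _, _, .cons h q, (i+1), hi => by
      have := edges_get' q i (by simpa [SimpleGraph.Walk.length_cons, Nat.succ_lt_succ_iff] using hi)
      simpa [SimpleGraph.Walk.edges, SimpleGraph.Walk.getVert] using this

lemma support_get' : ∀ {u w : V} (p : G.Walk u w) (i : ℕ) (h : i ≤ p.length),
    p.support.get ⟨i, by rw [p.length_support]; omega⟩ = p.getVert i
  | _, _, .nil, 0, _ => rfl
  | _, _, .cons h q, 0, _ => rfl
  | _, _, .cons h q, (i+1), hi => by
      have := support_get' q i (by simpa [SimpleGraph.Walk.length_cons] using hi)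
      simpa [SimpleGraph.Walk.support_cons, SimpleGraph.Walk.getVert] using this

lemma cycle_getVert_inj {v : V} {c : G.Walk v v} (hc : c.IsCycle) {i j : ℕ}
    (hi : i < c.length) (hj : j < c.length) (h : c.getVert i = c.getVert j) : i = j := by
  have hnd : c.support.tail.Nodup := hc.2
  have hlen : c.support.tail.length = c.length := by
    have := c.length_support; simp [List.length_tail, this]
  have htg : ∀ k (hk : k < c.length), c.support.tail.get ⟨k, by omega⟩ = c.getVert (k+1) := by
    intro k hk
    rw [List.get_tail _ _ (by omega), support_get' c (k+1) (by omega)]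
  have hinj : ∀ a b, a < c.length → b < c.length →
      c.getVert (a+1) = c.getVert (b+1) → a = b := by
    intro a b ha hb hab
    have := List.Nodup.get_inj_iff hnd (i := ⟨a, by omega⟩) (j := ⟨b, by omega⟩)
    rw [htg a ha, htg b hb] at this
    simpa using this.mp hab
  have hpos : 0 < c.length := by omega
  rcases Nat.eq_zero_or_pos i with rfl | hi0
  · rcases Nat.eq_zero_or_pos j with rfl | hj0
    · rfl
    · exfalso
      have h' : c.getVert (c.length - 1 + 1) = c.getVert ((j-1)+1) := by
        rw [show c.length - 1 + 1 = c.length by omega, c.getVert_length,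
          show j-1+1 = j by omega]
        simpa using h
      have := hinj _ _ (by omega) (by omega) h'
      omega
  · rcases Nat.eq_zero_or_pos j with rfl | hj0
    · exfalso
      have h' : c.getVert (c.length - 1 + 1) = c.getVert ((i-1)+1) := by
        rw [show c.length - 1 + 1 = c.length by omega, c.getVert_length,
          show i-1+1 = i by omega]
        simpa using h.symm
      have := hinj _ _ (by omega) (by omega) h'
      omega
    · have h' : c.getVert ((i-1)+1) = c.getVert ((j-1)+1) := by
        rw [show i-1+1 = i by omega, show j-1+1 = j by omega]; exact h
      have := hinj _ _ (by omega) (by omega) h'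
      omega

lemma alt_parity {M : Set (Sym2 V)} {l : List (Sym2 V)}
    (h : l.Chain' (fun e f => e ∈ M ↔ f ∉ M)) :
    ∀ i (hi : i < l.length) (h0 : 0 < l.length),
      (l.get ⟨i, hi⟩ ∈ M ↔ (Even i ↔ l.get ⟨0, h0⟩ ∈ M)) := by
  intro i
  induction i with
  | zero => intro hi h0; simp
  | succ i ih =>
    intro hi h0
    have hstep := List.isChain_iff_getElem.mp h i (by omega)
    have := ih (by omega) h0
    simp only [List.get_eq_getElem] at this ⊢
    rw [this] at hstep
    rw [Nat.even_add_one]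
    tauto

lemma alt_even_length {M : Set (Sym2 V)} {l : List (Sym2 V)} (hne : 0 < l.length)
    (h : l.Chain' (fun e f => e ∈ M ↔ f ∉ M))
    (hwrap : ∀ e f, l.head? = some e → l.getLast? = some f → (f ∈ M ↔ e ∉ M)) :
    Even l.length := by
  have hl : l ≠ [] := by intro h'; simp [h'] at hne
  have h1 : l.head? = some (l.get ⟨0, hne⟩) := by
    rw [List.head?_eq_head hl]; congr 1; exact List.head_eq_getElem hl
  have h2 : l.getLast? = some (l.get ⟨l.length - 1, by omega⟩) := by
    rw [List.getLast?_eq_getLast hl]; congr 1; exact List.getLast_eq_getElem hl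
  have hw := hwrap _ _ h1 h2
  have hp := alt_parity h (l.length - 1) (by omega) hne
  rw [hp] at hw
  have : ¬ Even (l.length - 1) := by tauto
  have := Nat.odd_iff.mp (Nat.not_even_iff_odd.mp this)
  rcases Nat.even_or_odd l.length with he | ho
  · exact he
  · exfalso
    have := Nat.odd_iff.mp ho
    omega

lemma alt_cycle_local {M : Set (Sym2 V)} {v : V} {c : G.Walk v v}
    (hcyc : c.IsCycle)
    (hch : c.edges.Chain' (fun e f => e ∈ M ↔ f ∉ M))
    (hwrap : ∀ e f, c.edges.head? = some e → c.edges.getLast? = some f → (f ∈ M ↔ e ∉ M))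
    {x : V} (hx : x ∈ c.support) :
    ∃ e f, e ∈ c.edges ∧ f ∈ c.edges ∧ x ∈ e ∧ x ∈ f ∧ e ∈ M ∧ f ∉ M ∧
      ∀ g ∈ c.edges, x ∈ g → g = e ∨ g = f := by
  obtain ⟨m, hmdef⟩ : ∃ m, m = c.length := ⟨_, rfl⟩
  have hm3 : 3 ≤ m := hmdef ▸ hcyc.three_le_length
  have hlen : c.edges.length = m := by rw [hmdef]; exact c.length_edges
  have hml : 0 < c.edges.length := by omega
  have heven : Even m := by rw [← hlen]; exact alt_even_length hml hch hwrap
  -- index of x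
  obtain ⟨k₀, hk₀, hk₀le⟩ := SimpleGraph.Walk.mem_support_iff_exists_getVert.mp hx
  have hkle : k₀ ≤ m := by rw [hmdef]; exact hk₀le
  have hkey : ∃ k, k < m ∧ c.getVert k = x := by
    rcases Nat.lt_or_ge k₀ m with h | h
    · exact ⟨k₀, h, hk₀⟩
    · have hke : k₀ = m := by omega
      refine ⟨0, by omega, ?_⟩
      rw [c.getVert_zero]
      have hv : c.getVert k₀ = v := by rw [hke, hmdef]; exact c.getVert_length
      exact hv.symm.trans hk₀
  obtain ⟨k, hk, hgk⟩ := hkey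
  -- membership characterization of edges containing x
  have hmem : ∀ i (hi : i < m), (x ∈ c.edges.get ⟨i, by omega⟩ ↔
      (c.getVert i = x ∨ c.getVert (i+1) = x)) := by
    intro i hi
    rw [edges_get' c i (hmdef ▸ hi), Sym2.mem_iff]
    constructor
    · rintro (rfl | rfl) <;> simp
    · rintro (h | h) <;> simp [h]
  -- second-endpoint analysis
  have hsnd : ∀ i, i < m → c.getVert (i+1) = x → (i + 1 = k ∨ (k = 0 ∧ i = m - 1)) := by
    intro i hi hxi
    rcases Nat.lt_or_ge (i+1) m with h | h
    · left; exact cycle_getVert_inj hcyc (hmdef ▸ h) (hmdef ▸ hk) (hxi.trans hgk.symm)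
    · have him : i + 1 = m := by omega
      right
      have hx0 : c.getVert 0 = x := by
        rw [c.getVert_zero, ← c.getVert_length, ← hmdef, ← him, hxi]
      have : k = 0 := cycle_getVert_inj hcyc (hmdef ▸ hk) (by rw [← hmdef]; omega) (hgk.trans hx0.symm)
      exact ⟨this, by omega⟩
  obtain ⟨a, hadef⟩ : ∃ a, a = if k = 0 then m - 1 else k - 1 := ⟨_, rfl⟩
  have ha : a < m := by rw [hadef]; split <;> omega
  have hxa : x ∈ c.edges.get ⟨a, by omega⟩ := by
    rw [hmem a ha]; right
    by_cases h0 : k = 0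
    · have h1 : c.getVert m = v := by rw [hmdef]; exact c.getVert_length
      rw [h0, c.getVert_zero] at hgk
      rw [hadef, if_pos h0, show m - 1 + 1 = m by omega, h1]
      exact hgk
    · rw [hadef, if_neg h0, show k - 1 + 1 = k by omega]; exact hgk
  have hxb : x ∈ c.edges.get ⟨k, by omega⟩ := by rw [hmem k hk]; left; exact hgk
  -- parity distinct
  have hparity : ¬ (Even a ↔ Even k) := by
    have hme := Nat.even_iff.mp heven
    by_cases h0 : k = 0
    · rw [hadef, if_pos h0, h0]
      rw [Nat.even_iff, Nat.even_iff]
      omega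
    · rw [hadef, if_neg h0]
      rw [Nat.even_iff, Nat.even_iff]
      omega
  have hpa := alt_parity hch a (by omega) hml
  have hpb := alt_parity hch k (by omega) hml
  have halt : (c.edges.get ⟨a, by omega⟩ ∈ M ↔ c.edges.get ⟨k, by omega⟩ ∉ M) := by
    clear * - hpa hpb hparity
    rw [hpa, hpb]; tauto
  -- uniqueness
  have huniq : ∀ g ∈ c.edges, x ∈ g →
      g = c.edges.get ⟨a, by omega⟩ ∨ g = c.edges.get ⟨k, by omega⟩ := by
    intro g hg hxg
    obtain ⟨⟨i, hi'⟩, rfl⟩ := List.mem_iff_get.mp hg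
    have hi : i < m := by omega
    rcases (hmem i hi).mp (by convert hxg) with h | h
    · right
      have : i = k := cycle_getVert_inj hcyc (hmdef ▸ hi) (hmdef ▸ hk) (h.trans hgk.symm)
      simp [this]
    · rcases hsnd i hi h with h' | ⟨h0, h1⟩
      · left
        have : i = a := by rw [hadef]; split <;> omega
        simp [this]
      · left
        have : i = a := by rw [hadef]; split <;> omega
        simp [this]
  by_cases hbm : c.edges.get ⟨k, by omega⟩ ∈ M
  · have hfa : c.edges.get ⟨a, by omega⟩ ∉ M := fun h => (halt.mp h) hbm
    refine ⟨_, _, List.get_mem _ _, List.get_mem _ _, hxb, hxa, hbm, hfa, ?_⟩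
    intro g hg hxg
    rcases huniq g hg hxg with h | h
    · right; exact h
    · left; exact h
  · have hea : c.edges.get ⟨a, by omega⟩ ∈ M := halt.mpr hbm
    exact ⟨_, _, List.get_mem _ _, List.get_mem _ _, hxa, hxb, hea, hbm, huniq⟩

lemma mem_support_of_mem_edge {u w : V} {p : G.Walk u w} {e : Sym2 V} (he : e ∈ p.edges)
    {x : V} (hx : x ∈ e) : x ∈ p.support := by
  induction e with
  | _ a b =>
    rcases Sym2.mem_iff.mp hx with rfl | rfl
    · exact p.fst_mem_support_of_mem_edges he
    · exact p.snd_mem_support_of_mem_edges he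

end Helpers


/-- `M` is a perfect matching of the graph `G` restricted to the vertex set `A`:
a set of pairwise disjoint edges of `G`, with all endpoints in `A`, covering every
vertex of `A`. -/
def IsPMOn {V : Type*} (G : SimpleGraph V) (A : Set V) (M : Set (Sym2 V)) : Prop :=
  M ⊆ G.edgeSet ∧ (∀ e ∈ M, ∀ v ∈ e, v ∈ A) ∧
    (M.Pairwise fun e f => ∀ v, v ∈ e → v ∉ f) ∧ (∀ v ∈ A, ∃ e ∈ M, v ∈ e)

/-- `S` is a forcing set of the perfect matching `M` of `G` (restricted to `A`):
`S ⊆ M` and `M` is the unique perfect matching containing `S`. -/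
def IsForcingOn {V : Type*} (G : SimpleGraph V) (A : Set V) (M S : Set (Sym2 V)) : Prop :=
  S ⊆ M ∧ ∀ M', IsPMOn G A M' → S ⊆ M' → M' = M

/-- The forcing number of a perfect matching: minimum size of a forcing set. -/
noncomputable def forcingNumOn {V : Type*} (G : SimpleGraph V) (A : Set V)
    (M : Set (Sym2 V)) : ℕ :=
  sInf {n | ∃ S, IsForcingOn G A M S ∧ S.ncard = n}

/-- Vertices remaining after deleting the endpoints of edges in `S`. -/
def delVerts {V : Type*} (S : Set (Sym2 V)) : Set V := {v | ∀ e ∈ S, v ∉ e}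

/-- A closed walk `c` is an `M`-alternating cycle: it is a cycle and its edges
alternate between `M` and its complement (including around the wrap). -/
def IsAltCycle {V : Type*} (G : SimpleGraph V) (M : Set (Sym2 V)) {v : V}
    (c : G.Walk v v) : Prop :=
  c.IsCycle ∧ c.edges.Chain' (fun e f => e ∈ M ↔ f ∉ M) ∧
    ∀ e f, c.edges.head? = some e → c.edges.getLast? = some f → (f ∈ M ↔ e ∉ M)

section Helpers2

variable {V : Type*} {G : SimpleGraph V}

lemma pm_flip {M : Set (Sym2 V)} (hM : IsPMOn G Set.univ M) {v : V} {c : G.Walk v v}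
    (hc : IsAltCycle G M c) :
    IsPMOn G Set.univ ((M \ {e | e ∈ c.edges}) ∪ ({e | e ∈ c.edges} \ M)) := by
  obtain ⟨hcyc, hch, hwrap⟩ := hc
  obtain ⟨hMsub, -, hMpair, hMcov⟩ := hM
  set C : Set (Sym2 V) := {e | e ∈ c.edges} with hC
  have master := fun {x} hx => alt_cycle_local hcyc hch hwrap (x := x) hx
  refine ⟨?_, fun _ _ _ _ => Set.mem_univ _, ?_, ?_⟩
  · rintro e (⟨he, -⟩ | ⟨he, -⟩)
    · exact hMsub he
    · exact c.edges_subset_edgeSet he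
  · intro e he f hf hef x hxe hxf
    rcases he with ⟨heM, heC⟩ | ⟨heC, heM⟩ <;> rcases hf with ⟨hfM, hfC⟩ | ⟨hfC, hfM⟩
    · exact hMpair heM hfM hef x hxe hxf
    · have hxs : x ∈ c.support := mem_support_of_mem_edge hfC hxf
      obtain ⟨e', f', he'C, hf'C, hxe', hxf', he'M, hf'M, -⟩ := master hxs
      by_cases h : e = e'
      · exact heC (h ▸ he'C)
      · exact hMpair heM he'M h x hxe hxe'
    · have hxs : x ∈ c.support := mem_support_of_mem_edge heC hxe
      obtain ⟨e', f', he'C, hf'C, hxe', hxf', he'M, hf'M, -⟩ := master hxs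
      by_cases h : f = e'
      · exact hfC (h ▸ he'C)
      · exact hMpair hfM he'M h x hxf hxe'
    · have hxs : x ∈ c.support := mem_support_of_mem_edge heC hxe
      obtain ⟨e', f', he'C, hf'C, hxe', hxf', he'M, hf'M, huniq⟩ := master hxs
      rcases huniq e heC hxe with rfl | rfl
      · exact heM he'M
      · rcases huniq f hfC hxf with rfl | rfl
        · exact hfM he'M
        · exact hef rfl
  · intro x _
    obtain ⟨e, heM, hxe⟩ := hMcov x (Set.mem_univ x)
    by_cases heC : e ∈ C
    · have hxs : x ∈ c.support := mem_support_of_mem_edge heC hxe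
      obtain ⟨e', f', he'C, hf'C, hxe', hxf', he'M, hf'M, -⟩ := master hxs
      exact ⟨f', Or.inr ⟨hf'C, hf'M⟩, hxf'⟩
    · exact ⟨e, Or.inl ⟨heM, heC⟩, hxe⟩

lemma pm_sub_pm {M M' : Set (Sym2 V)} (hM : IsPMOn G Set.univ M)
    (hM' : IsPMOn G Set.univ M') (h : M ⊆ M') : M' = M := by
  refine Set.Subset.antisymm (fun e he => ?_) h
  induction e with
  | _ a b =>
    obtain ⟨f, hfM, haf⟩ := hM.2.2.2 a (Set.mem_univ a)
    by_cases hef : s(a, b) = f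
    · exact hef ▸ hfM
    · exact absurd haf (hM'.2.2.1 he (h hfM) hef a (Sym2.mem_mk_left a b))

end Helpers2

/-- If `S` consists of exactly one `M`-edge from each cycle of a family of pairwise
disjoint `M`-alternating cycles, and all other `M`-edges on these cycles belong to
every perfect matching of `G − V(S)`, then `S` is contained in some minimum
forcing set of `M`. -/
theorem subset_of_min_forcing_set {V : Type*} [Fintype V]
    (G : SimpleGraph V) (M : Set (Sym2 V)) (hM : IsPMOn G Set.univ M)
    (n : ℕ) (v : Fin n → V) (c : ∀ i, G.Walk (v i) (v i))
    (halt : ∀ i, IsAltCycle G M (c i))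
    (hdisj : ∀ i j, i ≠ j → ∀ x, x ∈ (c i).support → x ∉ (c j).support)
    (s : Fin n → Sym2 V) (hsM : ∀ i, s i ∈ M) (hsc : ∀ i, s i ∈ (c i).edges)
    (S : Set (Sym2 V)) (hS : S = Set.range s)
    (hdef : ∀ i, ∀ e ∈ (c i).edges, e ∈ M → e ∉ S →
      ∀ M', IsPMOn G (delVerts S) M' → e ∈ M') :
    ∃ T, IsForcingOn G Set.univ M T ∧ T.ncard = forcingNumOn G Set.univ M ∧
      S ⊆ T := by
  classical
  -- M itself is a forcing set
  have hMf : IsForcingOn G Set.univ M M :=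
    ⟨subset_rfl, fun M' hM' hsub => pm_sub_pm hM hM' hsub⟩
  -- a minimum forcing set F
  have hne : ∃ k, k ∈ {k | ∃ F, IsForcingOn G Set.univ M F ∧ F.ncard = k} :=
    ⟨M.ncard, M, hMf, rfl⟩
  obtain ⟨F, hF, hFcard⟩ := Nat.sInf_mem (Set.nonempty_def.mpr hne)
  -- every forcing set hits every cycle in an M-edge
  have hhit : ∀ i, ∃ e, e ∈ F ∧ e ∈ M ∧ e ∈ (c i).edges := by
    intro i
    by_contra hno
    push_neg at hno
    have hFC : ∀ e ∈ F, e ∉ (c i).edges := fun e he => hno e he (hF.1 he)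
    set C : Set (Sym2 V) := {e | e ∈ (c i).edges} with hC
    obtain ⟨hcyc, hch, hwrap⟩ := halt i
    have hpm' : IsPMOn G Set.univ ((M \ C) ∪ (C \ M)) := pm_flip hM (halt i)
    have hsub : F ⊆ (M \ C) ∪ (C \ M) := fun e he => Or.inl ⟨hF.1 he, hFC e he⟩
    have heq := hF.2 _ hpm' hsub
    -- derive contradiction from a first edge of the cycle
    have hlen : (c i).edges ≠ [] := by
      have := hcyc.three_le_length
      intro h
      have := (c i).length_edges
      rw [h] at this
      simp at this
      omega
    obtain ⟨e₀, he₀⟩ := List.exists_mem_of_ne_nil _ hlen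
    have he₀C : e₀ ∈ C := he₀
    by_cases he₀M : e₀ ∈ M
    · have : e₀ ∈ (M \ C) ∪ (C \ M) := by rw [heq]; exact he₀M
      rcases this with ⟨-, h⟩ | ⟨-, h⟩
      · exact h he₀C
      · exact h he₀M
    · have : e₀ ∈ (M \ C) ∪ (C \ M) := Or.inr ⟨he₀C, he₀M⟩
      rw [heq] at this
      exact he₀M this
  choose f hfF hfM hfc using hhit
  -- injectivity of f and s
  have hedge_inj : ∀ (g : Fin n → Sym2 V), (∀ i, g i ∈ (c i).edges) → Function.Injective g := by
    intro g hg i j hij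
    by_contra hne'
    obtain ⟨a, ha⟩ : ∃ a, a ∈ g i := by
      induction (g i) using Sym2.ind with
      | _ a b => exact ⟨a, Sym2.mem_mk_left a b⟩
    have h1 : a ∈ (c i).support := mem_support_of_mem_edge (hg i) ha
    have h2 : a ∈ (c j).support := mem_support_of_mem_edge (hg j) (hij ▸ ha)
    exact hdisj i j hne' a h1 h2
  have hfinj : Function.Injective f := hedge_inj f hfc
  have hsinj : Function.Injective s := hedge_inj s hsc
  -- the new forcing set
  have hTf : IsForcingOn G Set.univ M ((F \ Set.range f) ∪ S) := by
    constructor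
    · rintro e (⟨he, -⟩ | he)
      · exact hF.1 he
      · rw [hS] at he; obtain ⟨i, rfl⟩ := he; exact hsM i
    intro M' hM' hsub
    have hSM' : S ⊆ M' := fun e he => hsub (Or.inr he)
    -- M' minus S is a PM of G - V(S)
    have hM'' : IsPMOn G (delVerts S) (M' \ S) := by
      refine ⟨fun e he => hM'.1 he.1, ?_, hM'.2.2.1.mono Set.diff_subset, ?_⟩
      · rintro e ⟨heM', heS⟩ x hx g hgS
        exact fun hxg => hM'.2.2.1 (hSM' hgS) heM' (fun h => heS (h ▸ hgS)) x hxg hx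
      · intro x hx
        obtain ⟨e, heM', hxe⟩ := hM'.2.2.2 x (Set.mem_univ x)
        exact ⟨e, ⟨heM', fun heS => hx e heS hxe⟩, hxe⟩
    have hfM' : ∀ i, f i ∈ M' := by
      intro i
      by_cases hfS : f i ∈ S
      · exact hSM' hfS
      · exact ((hdef i (f i) (hfc i) (hfM i) hfS) (M' \ S) hM'').1
    have hFM' : F ⊆ M' := by
      intro e he
      by_cases hef : e ∈ Set.range f
      · obtain ⟨i, rfl⟩ := hef; exact hfM' i
      · exact hsub (Or.inl ⟨he, hef⟩)
    exact hF.2 M' hM' hFM'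
  refine ⟨(F \ Set.range f) ∪ S, hTf, ?_, fun e he => Or.inr he⟩
  · -- cardinality
    have hfin : ∀ A : Set (Sym2 V), A.Finite := fun A => A.toFinite
    have hrf : Set.range f ⊆ F := by rintro e ⟨i, rfl⟩; exact hfF i
    have hrfcard : (Set.range f).ncard = n := by
      rw [← Nat.card_coe_set_eq, Nat.card_range_of_injective hfinj,
        Nat.card_eq_fintype_card, Fintype.card_fin]
    have hScard : S.ncard = n := by
      rw [hS, ← Nat.card_coe_set_eq, Nat.card_range_of_injective hsinj,
        Nat.card_eq_fintype_card, Fintype.card_fin]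
    have hnF : n ≤ F.ncard := by
      rw [← hrfcard]; exact Set.ncard_le_ncard hrf (hfin F)
    have hdiff : (F \ Set.range f).ncard = F.ncard - n := by
      rw [Set.ncard_diff hrf (hfin _), hrfcard]
    have hTle : ((F \ Set.range f) ∪ S).ncard ≤ F.ncard := by
      calc ((F \ Set.range f) ∪ S).ncard ≤ (F \ Set.range f).ncard + S.ncard :=
            Set.ncard_union_le _ _
        _ = (F.ncard - n) + n := by rw [hdiff, hScard]
        _ = F.ncard := by omega
    have h1 : forcingNumOn G Set.univ M ≤ ((F \ Set.range f) ∪ S).ncard :=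
      Nat.sInf_le ⟨_, hTf, rfl⟩
    have h2 : F.ncard = forcingNumOn G Set.univ M := hFcard
    omega
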